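/- Let n ≥ 2 and, in the polynomial ring ℤ[X₁,…,X_n], set z_k := 2X_k for 1 ≤ k ≤ n−1 and z_n := X₁ + ⋯ + X_n. For integers d₁,…,d_n, the polynomial d₁X₁² + ⋯ + d_nX_n² lies in the ℤ-submodule spanned by the products z_i·z_j (1 ≤ i ≤ j ≤ n) if and only if: d₁ + d₂ ≡ 0 (mod 4) when n = 2, and d_i ≡ 0 (mod 2) for all i together with d_i ≡ d_j (mod 4) for all i, j when n ≥ 3. (This is the congruence condition (4.6) in the proof of Proposition 4.1 of the paper, characterizing the W-invariant integral quadratic forms on the lattice T_H^*.) -/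

import Mathlib

open MvPolynomial Finset

/-- The element `z_k` of the proof of Proposition 4.1: `z_k = 2X_k` for `1 ≤ k ≤ n−1`
(indices `(k : ℕ) < n − 1` of `Fin n`) and `z_n = X₁ + ⋯ + X_n` (the last index). -/
noncomputable def zGen (n : ℕ) (k : Fin n) : MvPolynomial (Fin n) ℤ :=
  if (k : ℕ) < n - 1 then 2 * X k else ∑ i : Fin n, X i

lemma sq_sum_aux {ι R : Type*} [LinearOrder ι] [DecidableEq ι] [CommRing R]
    (s : Finset ι) (f : ι → R) :
    (∑ i ∈ s, f i)^2 = (∑ i ∈ s, f i ^ 2)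
      + 2 * ∑ p ∈ s.offDiag.filter (fun p => p.1 < p.2), f p.1 * f p.2 := by
  have h1 : (∑ i ∈ s, f i)^2 = ∑ p ∈ s ×ˢ s, f p.1 * f p.2 := by
    rw [sq, Finset.sum_mul_sum, ← Finset.sum_product']
  rw [h1, ← Finset.diag_union_offDiag s,
    Finset.sum_union (Finset.disjoint_diag_offDiag s), Finset.sum_diag]
  congr 1
  · exact Finset.sum_congr rfl fun i _ => (sq (f i)).symm
  rw [← Finset.sum_filter_add_sum_filter_not s.offDiag (fun p => p.1 < p.2), two_mul]
  congr 1
  apply Finset.sum_bij' (fun p _ => Prod.swap p) (fun p _ => Prod.swap p)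
  · intro a ha
    simp only [Finset.mem_filter, Finset.mem_offDiag] at ha ⊢
    obtain ⟨⟨h1', h2', h3'⟩, h4'⟩ := ha
    exact ⟨⟨h2', h1', h3'.symm⟩, lt_of_le_of_ne (not_lt.mp h4') h3'.symm⟩
  · intro a ha
    simp only [Finset.mem_filter, Finset.mem_offDiag] at ha ⊢
    obtain ⟨⟨h1', h2', h3'⟩, h4'⟩ := ha
    exact ⟨⟨h2', h1', h3'.symm⟩, not_lt.mpr h4'.le⟩
  · intro a ha; rfl
  · intro a ha; rfl
  · intro a ha; exact mul_comm _ _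

lemma span_mem_aux (n : ℕ) (hn : 2 ≤ n) (d : Fin n → ℤ)
    (h4 : ∀ i : Fin n, (i : ℕ) < n - 1 → (4:ℤ) ∣ d i + d ⟨n-1, by omega⟩)
    (h2 : (2:ℤ) ∣ d ⟨n-1, by omega⟩ ∨ n = 2) :
    (∑ i : Fin n, C (d i) * X i ^ 2) ∈
      Submodule.span ℤ {p : MvPolynomial (Fin n) ℤ |
        ∃ i j : Fin n, i ≤ j ∧ p = zGen n i * zGen n j} := by
  set m : Fin n := ⟨n-1, by omega⟩ with hm
  have hzm : zGen n m = ∑ i : Fin n, X i := by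
    rw [zGen, if_neg (by simp [hm])]
  set A : Finset (Fin n) := Finset.univ.erase m with hA
  have hAlt : ∀ i ∈ A, (i : ℕ) < n - 1 := by
    intro i hi
    have h1 : i ≠ m := (Finset.mem_erase.mp hi).1
    have h2' : (i : ℕ) < n := i.2
    have h3 : (i : ℕ) ≠ n - 1 := fun h => h1 (Fin.ext h)
    omega
  have hzi : ∀ i ∈ A, zGen n i = 2 * X i := fun i hi => by
    rw [zGen, if_pos (hAlt i hi)]
  have hmemzz : ∀ i j : Fin n, zGen n i * zGen n j ∈
      Submodule.span ℤ {p : MvPolynomial (Fin n) ℤ |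
        ∃ i j : Fin n, i ≤ j ∧ p = zGen n i * zGen n j} := by
    intro i j
    rcases le_total i j with h | h
    · exact Submodule.subset_span ⟨i, j, h, rfl⟩
    · rw [mul_comm]; exact Submodule.subset_span ⟨j, i, h, rfl⟩
  set PP := A.offDiag.filter (fun p => p.1 < p.2) with hPP
  set c := d m with hc
  have key : (∑ i : Fin n, C (d i) * X i ^ 2) =
      (∑ i ∈ A, ((d i + c)/4) • (zGen n i * zGen n i))
      + (c/2) • (∑ p ∈ PP, zGen n p.1 * zGen n p.2)
      + (∑ i ∈ A, (-c) • (zGen n i * zGen n m))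
      + c • (zGen n m * zGen n m) := by
    have hsq : (∑ i ∈ A, (X i : MvPolynomial (Fin n) ℤ))^2
        = (∑ i ∈ A, (X i : MvPolynomial (Fin n) ℤ)^2)
          + 2 * ∑ p ∈ PP, (X p.1 : MvPolynomial (Fin n) ℤ) * X p.2 :=
      sq_sum_aux A X
    have hS : (∑ i : Fin n, (X i : MvPolynomial (Fin n) ℤ))
        = (∑ i ∈ A, X i) + X m := (Finset.sum_erase_add _ _ (Finset.mem_univ m)).symm
    have hT : (∑ i : Fin n, C (d i) * X i ^ 2)
        = (∑ i ∈ A, C (d i) * X i ^ 2) + C c * X m ^ 2 :=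
      (Finset.sum_erase_add _ _ (Finset.mem_univ m)).symm
    have t1 : (∑ i ∈ A, ((d i + c)/4) • (zGen n i * zGen n i))
        = (∑ i ∈ A, C (d i) * X i ^ 2) + C c * ∑ i ∈ A, (X i : MvPolynomial (Fin n) ℤ)^2 := by
      have h' : ∀ i ∈ A, ((d i + c)/4) • (zGen n i * zGen n i)
          = C (d i) * X i ^ 2 + C c * X i ^ 2 := by
        intro i hi
        rw [hzi i hi, smul_eq_C_mul]
        have h44 : (4:ℤ) * ((d i + c)/4) = d i + c := Int.mul_ediv_cancel' (h4 i (hAlt i hi))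
        calc C ((d i + c)/4) * (2 * X i * (2 * X i))
            = C ((4:ℤ) * ((d i + c)/4)) * X i ^ 2 := by rw [map_mul, map_ofNat]; ring
          _ = C (d i) * X i ^ 2 + C c * X i ^ 2 := by rw [h44, map_add]; ring
      rw [Finset.sum_congr rfl h', Finset.sum_add_distrib, Finset.mul_sum]
    have t2 : (c/2) • (∑ p ∈ PP, zGen n p.1 * zGen n p.2)
        = C c * (2 * ∑ p ∈ PP, (X p.1 : MvPolynomial (Fin n) ℤ) * X p.2) := by
      have hPPz : ∀ p ∈ PP, zGen n p.1 * zGen n p.2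
          = 4 * ((X p.1 : MvPolynomial (Fin n) ℤ) * X p.2) := by
        intro p hp
        obtain ⟨hpo, -⟩ := Finset.mem_filter.mp hp
        obtain ⟨h1', h2', -⟩ := Finset.mem_offDiag.mp hpo
        rw [hzi _ h1', hzi _ h2']; ring
      rw [Finset.sum_congr rfl hPPz, ← Finset.mul_sum, smul_eq_C_mul]
      rcases h2 with h2 | h2
      · have hcc : (2:ℤ) * (c/2) = c := Int.mul_ediv_cancel' h2
        calc C (c/2) * (4 * ∑ p ∈ PP, (X p.1 : MvPolynomial (Fin n) ℤ) * X p.2)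
            = C ((2:ℤ) * (c/2)) * (2 * ∑ p ∈ PP, (X p.1 : MvPolynomial (Fin n) ℤ) * X p.2) := by
              rw [map_mul, map_ofNat]; ring
          _ = _ := by rw [hcc]
      · have hPPe : PP = ∅ := by
          rw [Finset.eq_empty_iff_forall_notMem]
          intro p hp
          obtain ⟨hpo, -⟩ := Finset.mem_filter.mp hp
          obtain ⟨h1', h2', hne⟩ := Finset.mem_offDiag.mp hpo
          have ha1 := hAlt _ h1'
          have ha2 := hAlt _ h2'
          apply hne
          apply Fin.ext
          omega
        simp [hPPe]
    have t3 : (∑ i ∈ A, (-c) • (zGen n i * zGen n m))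
        = -(C c) * (2 * (((∑ i ∈ A, (X i : MvPolynomial (Fin n) ℤ)))
            * ((∑ i ∈ A, (X i : MvPolynomial (Fin n) ℤ)) + X m))) := by
      have h' : ∀ i ∈ A, (-c) • (zGen n i * zGen n m)
          = (-(C c) * 2 * ((∑ i ∈ A, (X i : MvPolynomial (Fin n) ℤ)) + X m)) * X i := by
        intro i hi
        rw [hzi i hi, hzm, hS, smul_eq_C_mul, map_neg]; ring
      rw [Finset.sum_congr rfl h', ← Finset.mul_sum]
      ring
    have t4 : c • (zGen n m * zGen n m)
        = C c * ((∑ i ∈ A, (X i : MvPolynomial (Fin n) ℤ)) + X m)^2 := by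
      rw [hzm, hS, smul_eq_C_mul]; ring
    rw [hT, t1, t2, t3, t4]
    linear_combination (C c : MvPolynomial (Fin n) ℤ) * hsq
  rw [key]
  refine add_mem (add_mem (add_mem ?_ ?_) ?_) ?_
  · exact Submodule.sum_mem _ fun i _ => Submodule.smul_mem _ _ (hmemzz i i)
  · exact Submodule.smul_mem _ _ (Submodule.sum_mem _ fun p _ => hmemzz p.1 p.2)
  · exact Submodule.sum_mem _ fun i _ => Submodule.smul_mem _ _ (hmemzz i m)
  · exact Submodule.smul_mem _ _ (hmemzz m m)

/-- Evaluation at a point of `(ZMod 4)^n`, as a `ℤ`-linear map. -/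
noncomputable def Ev (n : ℕ) (v : Fin n → ZMod 4) :
    MvPolynomial (Fin n) ℤ →ₗ[ℤ] ZMod 4 :=
  (aeval v).toLinearMap

/-- Indicator vector. -/
def E (n : ℕ) (a : Fin n) : Fin n → ZMod 4 := fun k => if k = a then 1 else 0

lemma sumE (n : ℕ) (a : Fin n) : ∑ i, E n a i = 1 := by simp [E]

lemma sumE2 (n : ℕ) (a b : Fin n) : ∑ i, (E n a + E n b) i = 2 := by
  simp only [Pi.add_apply, Finset.sum_add_distrib, sumE]; decide

lemma Ev_gen (n : ℕ) (v : Fin n → ZMod 4) (i j : Fin n) :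
    Ev n v (zGen n i * zGen n j) =
      (if (i : ℕ) < n - 1 then 2 * v i else ∑ k, v k) *
      (if (j : ℕ) < n - 1 then 2 * v j else ∑ k, v k) := by
  rw [Ev, AlgHom.toLinearMap_apply, map_mul]
  congr 1 <;> (rw [zGen]; split_ifs <;> simp)

lemma Ev_T (n : ℕ) (v : Fin n → ZMod 4) (d : Fin n → ℤ) :
    Ev n v (∑ i : Fin n, C (d i) * X i ^ 2) = ∑ i, (d i : ZMod 4) * v i ^ 2 := by
  simp [Ev]

lemma EvT_single (n : ℕ) (d : Fin n → ℤ) (a : Fin n) :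
    ∑ i, (d i : ZMod 4) * (E n a i) ^ 2 = (d a : ZMod 4) := by
  have h : ∀ i : Fin n, (d i : ZMod 4) * (E n a i) ^ 2
      = if i = a then (d i : ZMod 4) else 0 := by
    intro i; unfold E; split_ifs <;> simp
  rw [Finset.sum_congr rfl fun i _ => h i, Finset.sum_ite_eq' univ a]
  simp

lemma EvT_pair (n : ℕ) (d : Fin n → ℤ) (a b : Fin n) (hab : a ≠ b) :
    ∑ i, (d i : ZMod 4) * ((E n a + E n b) i) ^ 2 = (d a : ZMod 4) + d b := by
  have h : ∀ i : Fin n, (d i : ZMod 4) * ((E n a + E n b) i) ^ 2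
      = (if i = a then (d i : ZMod 4) else 0) + (if i = b then (d i : ZMod 4) else 0) := by
    intro i
    simp only [Pi.add_apply, E]
    rcases eq_or_ne i a with rfl | ha <;> rcases eq_or_ne i b with rfl | hb
    · exact absurd rfl hab
    · simp [hb]
    · simp [ha]
    · simp [ha, hb]
  rw [Finset.sum_congr rfl fun i _ => h i, Finset.sum_add_distrib,
    Finset.sum_ite_eq' univ a, Finset.sum_ite_eq' univ b]
  simp

lemma kill_two (n : ℕ) (z0 z1 : Fin n) (i' j' : Fin n) :
    Ev n (E n z0) (zGen n i' * zGen n j') + Ev n (E n z0) (zGen n i' * zGen n j')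
      + Ev n (E n z1) (zGen n i' * zGen n j') + Ev n (E n z1) (zGen n i' * zGen n j')
      - Ev n (E n z0 + E n z1) (zGen n i' * zGen n j') = 0 := by
  simp only [Ev_gen, sumE, sumE2]
  by_cases hi' : (i' : ℕ) < n - 1 <;> by_cases hj' : (j' : ℕ) < n - 1 <;>
    simp only [hi', hj', if_pos, if_neg, if_true, if_false, not_false_iff] <;>
    (try simp only [Pi.add_apply, E]) <;> (try split_ifs) <;> decide

lemma kill_phi (n : ℕ) (i a0 a1 m : Fin n) (i' j' : Fin n) :
    Ev n (E n i) (zGen n i' * zGen n j') + Ev n (E n i) (zGen n i' * zGen n j')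
      + Ev n (E n a0 + E n a1) (zGen n i' * zGen n j')
      + Ev n (E n a0 + E n m) (zGen n i' * zGen n j')
      + Ev n (E n a1 + E n m) (zGen n i' * zGen n j')
      - Ev n (E n a0) (zGen n i' * zGen n j') - Ev n (E n a0) (zGen n i' * zGen n j')
      - Ev n (E n a1) (zGen n i' * zGen n j') - Ev n (E n a1) (zGen n i' * zGen n j')
      - Ev n (E n m) (zGen n i' * zGen n j') - Ev n (E n m) (zGen n i' * zGen n j') = 0 := by
  simp only [Ev_gen, sumE, sumE2]
  by_cases hi' : (i' : ℕ) < n - 1 <;> by_cases hj' : (j' : ℕ) < n - 1 <;>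
    simp only [hi', hj', if_pos, if_neg, if_true, if_false, not_false_iff] <;>
    (try simp only [Pi.add_apply, E]) <;> (try split_ifs) <;> decide

lemma kill_psi (n : ℕ) (i a m : Fin n) (i' j' : Fin n) :
    Ev n (E n i + E n a) (zGen n i' * zGen n j')
      + Ev n (E n a + E n m) (zGen n i' * zGen n j')
      - Ev n (E n a) (zGen n i' * zGen n j') - Ev n (E n a) (zGen n i' * zGen n j')
      + Ev n (E n m) (zGen n i' * zGen n j')
      + Ev n (E n m) (zGen n i' * zGen n j') = 0 := by
  simp only [Ev_gen, sumE, sumE2]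
  by_cases hi' : (i' : ℕ) < n - 1 <;> by_cases hj' : (j' : ℕ) < n - 1 <;>
    simp only [hi', hj', if_pos, if_neg, if_true, if_false, not_false_iff] <;>
    (try simp only [Pi.add_apply, E]) <;> (try split_ifs) <;> decide

/-- The congruence condition (4.6): `d₁X₁² + ⋯ + d_nX_n²` lies in the ℤ-span of the
products `z_i z_j` iff `d₁ + d₂ ≡ 0 (mod 4)` when `n = 2`, and `2 ∣ d_i` for all `i`
together with `d_i ≡ d_j (mod 4)` for all `i, j` when `n ≥ 3`. -/
theorem stmt_9 (n : ℕ) (hn : 2 ≤ n) (d : Fin n → ℤ) :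
    ((∑ i : Fin n, C (d i) * X i ^ 2) ∈
        Submodule.span ℤ {p : MvPolynomial (Fin n) ℤ |
          ∃ i j : Fin n, i ≤ j ∧ p = zGen n i * zGen n j}) ↔
      (if n = 2 then
          d ⟨0, by omega⟩ + d ⟨1, by omega⟩ ≡ 0 [ZMOD 4]
        else
          (∀ i, (2 : ℤ) ∣ d i) ∧ ∀ i j, d i ≡ d j [ZMOD 4]) := by
  have hker : ∀ (L : MvPolynomial (Fin n) ℤ →ₗ[ℤ] ZMod 4),
      (∀ i' j' : Fin n, L (zGen n i' * zGen n j') = 0) →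
      ((∑ i : Fin n, C (d i) * X i ^ 2) ∈
        Submodule.span ℤ {p : MvPolynomial (Fin n) ℤ |
          ∃ i j : Fin n, i ≤ j ∧ p = zGen n i * zGen n j}) →
      L (∑ i : Fin n, C (d i) * X i ^ 2) = 0 := by
    intro L hL h
    exact LinearMap.mem_ker.mp (Submodule.span_le.mpr
      (by rintro p ⟨i, j, -, rfl⟩; exact LinearMap.mem_ker.mpr (hL i j)) h)
  by_cases hn2 : n = 2
  · subst hn2
    rw [if_pos rfl]
    constructor
    · intro h
      have z0 : Fin 2 := ⟨0, by omega⟩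
      have h0 := hker
        (Ev 2 (E 2 ⟨0, by omega⟩) + Ev 2 (E 2 ⟨0, by omega⟩)
          + Ev 2 (E 2 ⟨1, by omega⟩) + Ev 2 (E 2 ⟨1, by omega⟩)
          - Ev 2 (E 2 ⟨0, by omega⟩ + E 2 ⟨1, by omega⟩))
        (fun i' j' => by
          simpa only [LinearMap.add_apply, LinearMap.sub_apply] using
            kill_two 2 ⟨0, by omega⟩ ⟨1, by omega⟩ i' j') h
      have hne : (⟨0, by omega⟩ : Fin 2) ≠ ⟨1, by omega⟩ := by
        simp [Fin.ext_iff]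
      simp only [LinearMap.add_apply, LinearMap.sub_apply, Ev_T, EvT_single,
        EvT_pair 2 d _ _ hne] at h0
      have hz : ((d ⟨0, by omega⟩ + d ⟨1, by omega⟩ : ℤ) : ZMod 4) = 0 := by
        push_cast
        push_cast at h0
        linear_combination h0
      rw [ZMod.intCast_zmod_eq_zero_iff_dvd] at hz
      exact Int.modEq_zero_iff_dvd.mpr (by exact_mod_cast hz)
    · intro h
      apply span_mem_aux 2 (by omega) d _ (Or.inr rfl)
      intro i hi
      have hi0 : i = ⟨0, by omega⟩ := Fin.ext (show (i : ℕ) = 0 by omega)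
      have hdd : (4:ℤ) ∣ d ⟨0, by omega⟩ + d ⟨1, by omega⟩ :=
        Int.modEq_zero_iff_dvd.mp h
      rw [hi0]
      exact hdd
  · have hn3 : 3 ≤ n := by omega
    rw [if_neg hn2]
    have hm : (n - 1 : ℕ) < n := by omega
    set m : Fin n := ⟨n-1, hm⟩ with hmdef
    have h0' : (0 : ℕ) < n := by omega
    have h1' : (1 : ℕ) < n := by omega
    set a0 : Fin n := ⟨0, h0'⟩ with ha0
    set a1 : Fin n := ⟨1, h1'⟩ with ha1
    have h01 : a0 ≠ a1 := by simp [ha0, ha1, Fin.ext_iff]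
    have h0m : a0 ≠ m := by simp only [ha0, hmdef, ne_eq, Fin.mk.injEq]; omega
    have h1m : a1 ≠ m := by simp only [ha1, hmdef, ne_eq, Fin.mk.injEq]; omega
    constructor
    · intro h
      have hpar : ∀ i : Fin n, (2:ℤ) ∣ d i := by
        intro i
        have hL := hker
          (Ev n (E n i) + Ev n (E n i)
            + Ev n (E n a0 + E n a1) + Ev n (E n a0 + E n m) + Ev n (E n a1 + E n m)
            - Ev n (E n a0) - Ev n (E n a0) - Ev n (E n a1) - Ev n (E n a1)
            - Ev n (E n m) - Ev n (E n m))
          (fun i' j' => by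
            simpa only [LinearMap.add_apply, LinearMap.sub_apply] using
              kill_phi n i a0 a1 m i' j') h
        simp only [LinearMap.add_apply, LinearMap.sub_apply, Ev_T, EvT_single,
          EvT_pair n d a0 a1 h01, EvT_pair n d a0 m h0m, EvT_pair n d a1 m h1m] at hL
        have hz : ((2 * d i : ℤ) : ZMod 4) = 0 := by
          push_cast
          linear_combination hL
        rw [ZMod.intCast_zmod_eq_zero_iff_dvd] at hz
        omega
      have hcong : ∀ i : Fin n, d i ≡ d m [ZMOD 4] := by
        intro i
        by_cases him : i = m
        · rw [him]
        · obtain ⟨a, hia, ham⟩ : ∃ a : Fin n, i ≠ a ∧ a ≠ m := by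
            by_cases hi0 : (i : ℕ) = 0
            · exact ⟨a1, by simp [ha1, Fin.ext_iff]; omega, h1m⟩
            · exact ⟨a0, by simp [ha0, Fin.ext_iff]; omega, h0m⟩
          have hL := hker
            (Ev n (E n i + E n a) + Ev n (E n a + E n m)
              - Ev n (E n a) - Ev n (E n a) + Ev n (E n m) + Ev n (E n m))
            (fun i' j' => by
              simpa only [LinearMap.add_apply, LinearMap.sub_apply] using
                kill_psi n i a m i' j') h
          simp only [LinearMap.add_apply, LinearMap.sub_apply, Ev_T, EvT_single,
            EvT_pair n d i a hia, EvT_pair n d a m ham] at hL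
          have hz : ((d i + 3 * d m : ℤ) : ZMod 4) = 0 := by
            push_cast
            linear_combination hL
          rw [ZMod.intCast_zmod_eq_zero_iff_dvd] at hz
          rw [Int.modEq_iff_dvd]
          omega
      exact ⟨hpar, fun i j => (hcong i).trans (hcong j).symm⟩
    · rintro ⟨hdvd, hcong⟩
      apply span_mem_aux n hn d
      · intro i _
        have hc1 := (Int.modEq_iff_dvd.mp (hcong i ⟨n-1, by omega⟩))
        have hc2 := hdvd i
        have hc3 := hdvd ⟨n-1, by omega⟩
        omega
      · exact Or.inl (hdvd _)
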